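/- Let $K \subseteq E$ be a finite Galois extension of differential fields of characteristic zero, where the derivation $D$ on $E$ extends that on $K$ and every $K$-automorphism of $E$ commutes with $D$. If $f \in E$ satisfies $D(f) \in K$, then $f = g + c$ where $g := \frac{1}{[E:K]}\mathrm{Tr}_{E/K}(f) \in K$ and $c \in E$ is a constant, i.e., $D(c) = 0$. -/

import Mathlib

/-- Lemma (trace argument): let `K ⊆ E` be a finite Galois extension of differential
fields of characteristic zero, where the derivation `D` on `E` maps (the image of) `K`
to itself and commutes with every `K`-automorphism of `E`.  If `f ∈ E` satisfies
`D(f) ∈ K`, then `f = g + c` where `g = (1/[E:K]) Tr_{E/K}(f)` lies in `K` and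
`c = f - g` is a constant, i.e. `D(c) = 0`. -/
theorem stmt_3 (K E : Type*) [Field K] [Field E] [CharZero K] [Algebra K E]
    [FiniteDimensional K E] [IsGalois K E]
    (D : E → E)
    (hadd : ∀ a b : E, D (a + b) = D a + D b)
    (hmul : ∀ a b : E, D (a * b) = a * D b + b * D a)
    (hcomm : ∀ σ : E ≃ₐ[K] E, ∀ a : E, σ (D a) = D (σ a))
    (hK : ∀ x : K, D (algebraMap K E x) ∈ Set.range (algebraMap K E))
    (f : E) (hf : D f ∈ Set.range (algebraMap K E)) :
    ((Module.finrank K E : E)⁻¹ * ∑ σ : E ≃ₐ[K] E, σ f) ∈ Set.range (algebraMap K E) ∧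
    D (f - (Module.finrank K E : E)⁻¹ * ∑ σ : E ≃ₐ[K] E, σ f) = 0 := by
  have hE : CharZero E := by
    exact charZero_of_injective_algebraMap (algebraMap K E).injective
  set n : ℕ := Module.finrank K E with hn
  have hnpos : 0 < n := Module.finrank_pos
  have hn0 : (n : E) ≠ 0 := Nat.cast_ne_zero.mpr hnpos.ne'
  -- g fixed by all automorphisms
  set g : E := (n : E)⁻¹ * ∑ σ : E ≃ₐ[K] E, σ f with hg
  have hfix : ∀ τ : E ≃ₐ[K] E, τ g = g := by
    intro τ
    rw [hg, map_mul, map_sum]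
    congr 1
    · rw [map_inv₀, map_natCast]
    · exact Fintype.sum_equiv (Equiv.mulLeft τ) _ _ (fun σ => rfl)
  have hmem : g ∈ Set.range (algebraMap K E) := by
    have : g ∈ IntermediateField.fixedField
        (IntermediateField.fixingSubgroup (⊥ : IntermediateField K E)) := by
      intro σ; exact hfix σ.1
    rw [IsGalois.fixedField_fixingSubgroup] at this
    exact IntermediateField.mem_bot.mp this
  refine ⟨hmem, ?_⟩
  -- D is additive, D 0 = 0, D of nat = 0
  have h0 : D 0 = 0 := by
    have := hadd 0 0; simpa using this
  have h1 : D 1 = 0 := by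
    have := hmul 1 1; simp at this; exact this
  have hnat : ∀ m : ℕ, D (m : E) = 0 := by
    intro m
    induction m with
    | zero => simpa using h0
    | succ k ih => push_cast; rw [hadd, ih, h1, add_zero]
  have hneg : ∀ a : E, D (-a) = - D a := by
    intro a; have := hadd a (-a); simp [h0] at this; linear_combination -this
  have hsub : ∀ a b : E, D (a - b) = D a - D b := by
    intro a b; rw [sub_eq_add_neg, hadd, hneg, sub_eq_add_neg]
  have hinv : D ((n : E)⁻¹) = 0 := by
    have := hmul (n : E) ((n : E)⁻¹)
    rw [mul_inv_cancel₀ hn0, h1, hnat] at this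
    have h2 : (n : E) * D (n:E)⁻¹ = 0 := by linear_combination -this
    exact (mul_eq_zero.mp h2).resolve_left hn0
  -- D f is fixed by all σ
  obtain ⟨x, hx⟩ := hf
  have hDsum : D (∑ σ : E ≃ₐ[K] E, σ f) = (n : E) * D f := by
    have hsum : ∀ (s : Finset (E ≃ₐ[K] E)), D (∑ σ ∈ s, σ f) = s.card * D f := by
      intro s
      induction s using Finset.cons_induction with
      | empty => simpa using h0
      | cons a s' hns ih =>
        rw [Finset.sum_cons, hadd, ih, ← hcomm a f, ← hx, AlgEquiv.commutes, hx,
          Finset.card_cons]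
        push_cast
        ring
    rw [hsum]
    congr 2
    simp [hn, IsGalois.card_aut_eq_finrank]
    rw [← Nat.card_eq_fintype_card, IsGalois.card_aut_eq_finrank]
  have hDg : D g = D f := by
    rw [hg, hmul, hinv, hDsum]
    field_simp
    simp
  rw [hsub, hDg, sub_self]
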